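/- Let (X, μ) be a Borel probability space, X a metric space with full-support μ, and fix a point x₀ ∈ X and c ≥ 0. The set of 1-Lipschitz functions f : X → ℝ with |f(x₀)| ≤ c is compact in the topology of pointwise convergence, and this topology coincides on this set with the topology of convergence in measure (Ky Fan metric). -/

import Mathlib

open MeasureTheory Set Filter
open scoped ENNReal Topology

/-- The Ky Fan (extended) distance between two maps into a pseudo-emetric space. -/
noncomputable def eKyFan {X Y : Type*} [MeasurableSpace X] [PseudoEMetricSpace Y]
    (μ : Measure X) (f g : X → Y) : ℝ≥0∞ :=
  sInf {ε : ℝ≥0∞ | μ {x | ε < edist (f x) (g x)} ≤ ε}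

theorem lipschitz_bounded_at_point_compact {X : Type*} [MetricSpace X]
    [MeasurableSpace X] [BorelSpace X]
    (μ : Measure X) [IsProbabilityMeasure μ]
    (hsupp : ∀ U : Set X, IsOpen U → U.Nonempty → 0 < μ U)
    (x₀ : X) (c : ℝ) (hc : 0 ≤ c) :
    -- compactness in the topology of pointwise convergence
    IsCompact {f : X → ℝ | LipschitzWith 1 f ∧ |f x₀| ≤ c} ∧
    -- on this set, pointwise convergence coincides with convergence in measure
    (∀ (F : ℕ → X → ℝ) (g : X → ℝ),
      (∀ n, LipschitzWith 1 (F n) ∧ |F n x₀| ≤ c) →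
      (LipschitzWith 1 g ∧ |g x₀| ≤ c) →
      (Tendsto F atTop (𝓝 g) ↔ Tendsto (fun n => eKyFan μ (F n) g) atTop (𝓝 0))) := by
  constructor
  · -- compactness
    have hK : IsCompact (Set.pi univ fun x : X => Icc (-(c + dist x x₀)) (c + dist x x₀)) :=
      isCompact_univ_pi fun x => isCompact_Icc
    refine hK.of_isClosed_subset ?_ ?_
    · have hset : {f : X → ℝ | LipschitzWith 1 f ∧ |f x₀| ≤ c} =
        (⋂ x, ⋂ y, {f : X → ℝ | dist (f x) (f y) ≤ dist x y}) ∩ {f | |f x₀| ≤ c} := by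
        ext f
        simp only [Set.mem_setOf_eq, Set.mem_inter_iff, Set.mem_iInter,
          lipschitzWith_iff_dist_le_mul, NNReal.coe_one, one_mul]
      rw [hset]
      refine IsClosed.inter ?_ ?_
      · exact isClosed_iInter fun x => isClosed_iInter fun y =>
          isClosed_le (Continuous.dist (continuous_apply x) (continuous_apply y)) continuous_const
      · exact isClosed_le (Continuous.abs (continuous_apply x₀)) continuous_const
    · intro f hf x _
      have h1 : dist (f x) (f x₀) ≤ dist x x₀ := by
        have := hf.1.dist_le_mul x x₀
        simpa using this
      have h2 : |f x - f x₀| ≤ dist x x₀ := by rwa [Real.dist_eq] at h1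
      have h3 := abs_le.mp h2
      have h4 := abs_le.mp hf.2
      exact Set.mem_Icc.mpr ⟨by linarith [h3.1, h4.1], by linarith [h3.2, h4.2]⟩
  · intro F g hF hg
    have hFm : ∀ n, AEStronglyMeasurable (F n) μ := fun n =>
      ((hF n).1.continuous.stronglyMeasurable).aestronglyMeasurable
    constructor
    · -- pointwise ⇒ Ky Fan → 0
      intro h
      have hpt : ∀ x, Tendsto (fun n => F n x) atTop (𝓝 (g x)) := by
        rw [tendsto_pi_nhds] at h; exact h
      have htim : TendstoInMeasure μ F atTop g :=
        tendstoInMeasure_of_tendsto_ae hFm (Filter.Eventually.of_forall fun x => hpt x)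
      rw [ENNReal.tendsto_atTop_zero]
      intro ε hε
      set ε' : ℝ≥0∞ := min ε 1 with hε'def
      have hε'pos : 0 < ε' := lt_min hε zero_lt_one
      have hε'ne : ε' ≠ ∞ := ne_top_of_le_ne_top ENNReal.one_ne_top (min_le_right _ _)
      set r : ℝ := ε'.toReal with hrdef
      have hr : 0 < r := ENNReal.toReal_pos hε'pos.ne' hε'ne
      have hev : ∀ᶠ n in atTop, μ {x | r ≤ dist (F n x) (g x)} < ε' :=
        (tendstoInMeasure_iff_dist.mp htim r hr).eventually (gt_mem_nhds hε'pos)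
      obtain ⟨N, hN⟩ := hev.exists_forall_of_atTop
      refine ⟨N, fun n hn => ?_⟩
      have hsub : {x | ε' < edist (F n x) (g x)} ⊆ {x | r ≤ dist (F n x) (g x)} := by
        intro x hx
        have : ε' < ENNReal.ofReal (dist (F n x) (g x)) := by
          rwa [← edist_dist]
        exact le_of_lt ((ENNReal.lt_ofReal_iff_toReal_lt hε'ne).mp this)
      have hmem : μ {x | ε' < edist (F n x) (g x)} ≤ ε' :=
        le_trans (measure_mono hsub) (hN n hn).le
      calc eKyFan μ (F n) g ≤ ε' := sInf_le hmem
        _ ≤ ε := min_le_left _ _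
    · -- Ky Fan → 0 ⇒ pointwise
      intro h
      rw [tendsto_pi_nhds]
      intro x
      rw [Metric.tendsto_atTop]
      intro ε hε
      have hB : 0 < μ (Metric.ball x (ε / 4)) :=
        hsupp _ Metric.isOpen_ball ⟨x, Metric.mem_ball_self (by linarith)⟩
      set m : ℝ≥0∞ := μ (Metric.ball x (ε / 4)) with hmdef
      have hmne : m ≠ ∞ := (measure_lt_top μ _).ne
      set δ : ℝ≥0∞ := min (ENNReal.ofReal (ε / 2)) m / 2 with hδdef
      have hδpos : 0 < δ := by
        refine ENNReal.half_pos (ne_of_gt ?_)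
        exact lt_min (ENNReal.ofReal_pos.mpr (by linarith)) hB
      have hδm : δ < m := by
        calc δ ≤ m / 2 := by
              exact ENNReal.div_le_div_right (min_le_right _ _) 2
          _ < m := ENNReal.half_lt_self hB.ne' hmne
      have hδε : δ ≤ ENNReal.ofReal (ε / 2) :=
        le_trans (ENNReal.half_le_self) (min_le_left _ _)
      have hev : ∀ᶠ n in atTop, eKyFan μ (F n) g < δ := h.eventually (gt_mem_nhds hδpos)
      obtain ⟨N, hN⟩ := hev.exists_forall_of_atTop
      refine ⟨N, fun n hn => ?_⟩
      by_contra hcon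
      push_neg at hcon
      obtain ⟨a, ha, haδ⟩ := sInf_lt_iff.mp (hN n hn)
      -- every point of the ball has large edist
      have hball : Metric.ball x (ε / 4) ⊆ {y | a < edist (F n y) (g y)} := by
        intro y hy
        have hd : dist y x < ε / 4 := hy
        have h1 : dist (F n y) (F n x) ≤ dist y x := by
          have := (hF n).1.dist_le_mul y x; simpa using this
        have h2 : dist (g y) (g x) ≤ dist y x := by
          have := hg.1.dist_le_mul y x; simpa using this
        have h3 : ε / 2 ≤ dist (F n y) (g y) := by
          have := dist_triangle4 (F n x) (F n y) (g y) (g x)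
          have hxd : ε ≤ dist (F n x) (g x) := hcon
          rw [dist_comm (F n x) (F n y)] at this
          rw [dist_comm (g y) (g x)] at h2
          linarith [dist_comm (g y) (g x)]
        have : ENNReal.ofReal (ε / 2) ≤ edist (F n y) (g y) := by
          rw [edist_dist]
          exact ENNReal.ofReal_le_ofReal h3
        exact lt_of_lt_of_le (lt_of_lt_of_le haδ hδε) this
      have : m ≤ a := le_trans (measure_mono hball) ha
      exact absurd (lt_of_le_of_lt this (lt_trans haδ hδm)) (lt_irrefl m)
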